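/- Let X^k, X^{k+1} ⪰ 0 with X^{k+1} produced by one DCA step, i.e., X^{k+1} minimizes (1/2)‖𝒜(X) − b‖₂² + λ⟨X, I − Δ^k⟩ over X ⪰ 0, where Δ^k ∈ ∂‖X^k‖_F, and the KKT conditions hold at X^{k+1} with multiplier Λ^{k+1} ⪰ 0, ⟨Λ^{k+1}, X^{k+1}⟩ = 0. Then φ(X^k) − φ(X^{k+1}) ≥ (1/2)‖𝒜(X^k − X^{k+1})‖₂² + λ(‖X^{k+1}‖_F − ‖X^k‖_F − ⟨Δ^k, X^{k+1} − X^k⟩) ≥ 0, where φ(X) = (1/2)‖𝒜(X) − b‖₂² + λ(Tr(X) − ‖X‖_F). -/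

import Mathlib

open Matrix
open scoped ComplexOrder

noncomputable def frob {n : ℕ} (X : Matrix (Fin n) (Fin n) ℂ) : ℝ :=
  Real.sqrt ((Xᴴ * X).trace.re)

noncomputable def enorm' {m : ℕ} (v : Fin m → ℝ) : ℝ :=
  Real.sqrt (∑ i, (v i) ^ 2)

/-- Operator norm of a linear map `𝒜` restricted to Hermitian matrices,
with Frobenius norm on the source and Euclidean norm on the target. -/
noncomputable def opNormL {n m : ℕ}
    (𝒜 : Matrix (Fin n) (Fin n) ℂ →ₗ[ℝ] (Fin m → ℝ)) : ℝ :=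
  sSup {t : ℝ | ∃ X : Matrix (Fin n) (Fin n) ℂ, X.IsHermitian ∧ X ≠ 0 ∧
    t = enorm' (𝒜 X) / frob X}

noncomputable def phi {n m : ℕ} (𝒜 : Matrix (Fin n) (Fin n) ℂ →ₗ[ℝ] (Fin m → ℝ))
    (b : Fin m → ℝ) (lam : ℝ) (X : Matrix (Fin n) (Fin n) ℂ) : ℝ :=
  (1 / 2) * (enorm' (𝒜 X - b)) ^ 2 + lam * (X.trace.re - frob X)

lemma psd_trace_re_nonneg {n : ℕ} {M : Matrix (Fin n) (Fin n) ℂ}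
    (hM : M.PosSemidef) : 0 ≤ M.trace.re := by
  have h : ∀ i, (0:ℂ) ≤ M i i := fun i => by
    exact hM.diag_nonneg
  have h2 : (0:ℂ) ≤ M.trace := Finset.sum_nonneg fun i _ => h i
  simpa using (Complex.le_def.mp h2).1

open scoped MatrixOrder in
lemma mul_psd_trace_re_nonneg {n : ℕ} {A B : Matrix (Fin n) (Fin n) ℂ}
    (hA : A.PosSemidef) (hB : B.PosSemidef) : 0 ≤ ((Aᴴ * B).trace).re := by
  have hS : (CFC.sqrt A).PosSemidef := by
    exact (CFC.sqrt_nonneg A).posSemidef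
  have key : ((CFC.sqrt A)ᴴ * B * CFC.sqrt A).PosSemidef := hB.conjTranspose_mul_mul_same _
  have e : ((CFC.sqrt A)ᴴ * B * CFC.sqrt A).trace = (Aᴴ * B).trace := by
    rw [hA.1.eq, trace_mul_comm, ← mul_assoc, hS.1.eq]
    rw [CFC.sqrt_mul_sqrt_self A hA.nonneg]
  have := psd_trace_re_nonneg key
  rwa [e] at this

lemma re_trace_conjTranspose_mul_comm {n : ℕ} (A B : Matrix (Fin n) (Fin n) ℂ) :
    ((Aᴴ * B).trace).re = ((Bᴴ * A).trace).re := by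
  have : (Bᴴ * A).trace = star ((Aᴴ * B).trace) := by
    rw [← trace_conjTranspose, conjTranspose_mul, conjTranspose_conjTranspose]
  rw [this, Complex.star_def, Complex.conj_re]

theorem stmt_17 {n m : ℕ}
    (𝒜 : Matrix (Fin n) (Fin n) ℂ →ₗ[ℝ] (Fin m → ℝ))
    (𝒜adj : (Fin m → ℝ) →ₗ[ℝ] Matrix (Fin n) (Fin n) ℂ)
    (hadj : ∀ X : Matrix (Fin n) (Fin n) ℂ, X.IsHermitian →
      ∀ y : Fin m → ℝ, (∑ i, 𝒜 X i * y i) = ((Xᴴ * 𝒜adj y).trace).re)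
    (b : Fin m → ℝ) (lam : ℝ) (hlam : 0 < lam)
    (Xk Xk1 Δ : Matrix (Fin n) (Fin n) ℂ)
    (hXk : Xk.PosSemidef) (hXk1 : Xk1.PosSemidef)
    -- `Δ` is a subgradient of the Frobenius norm at `Xk`
    (hΔ : ∀ Y : Matrix (Fin n) (Fin n) ℂ,
      ((Δᴴ * (Y - Xk)).trace).re ≤ frob Y - frob Xk)
    -- `Xk1` minimizes the convex DCA subproblem
    (hmin : ∀ X : Matrix (Fin n) (Fin n) ℂ, X.PosSemidef →
      (1 / 2) * (enorm' (𝒜 Xk1 - b)) ^ 2 +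
        lam * ((Xk1ᴴ * ((1 : Matrix (Fin n) (Fin n) ℂ) - Δ)).trace).re ≤
      (1 / 2) * (enorm' (𝒜 X - b)) ^ 2 +
        lam * ((Xᴴ * ((1 : Matrix (Fin n) (Fin n) ℂ) - Δ)).trace).re)
    -- KKT conditions at `Xk1`
    (Λ : Matrix (Fin n) (Fin n) ℂ) (hΛ : Λ.PosSemidef)
    (hstat : 𝒜adj (𝒜 Xk1 - b) +
      lam • ((1 : Matrix (Fin n) (Fin n) ℂ) - Δ) = Λ)
    (hcomp : (Λᴴ * Xk1).trace = 0) :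
    (1 / 2) * (enorm' (𝒜 (Xk - Xk1))) ^ 2 +
      lam * (frob Xk1 - frob Xk - ((Δᴴ * (Xk1 - Xk)).trace).re) ≤
      phi 𝒜 b lam Xk - phi 𝒜 b lam Xk1 ∧
    0 ≤ (1 / 2) * (enorm' (𝒜 (Xk - Xk1))) ^ 2 +
      lam * (frob Xk1 - frob Xk - ((Δᴴ * (Xk1 - Xk)).trace).re) := by
  have hsub : ((Δᴴ * (Xk1 - Xk)).trace).re ≤ frob Xk1 - frob Xk := hΔ Xk1
  have esq : ∀ (v : Fin m → ℝ), (enorm' v)^2 = ∑ i, v i ^ 2 := fun v =>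
    Real.sq_sqrt (Finset.sum_nonneg fun i _ => sq_nonneg _)
  constructor
  · set D := Xk - Xk1 with hD
    have hDh : D.IsHermitian := hXk.1.sub hXk1.1
    have hAdjEq : 𝒜adj (𝒜 Xk1 - b) = Λ - lam • ((1 : Matrix (Fin n) (Fin n) ℂ) - Δ) :=
      eq_sub_of_add_eq hstat
    have hip : ∑ i, 𝒜 D i * (𝒜 Xk1 - b) i = ((Dᴴ * 𝒜adj (𝒜 Xk1 - b)).trace).re :=
      hadj D hDh _
    -- expand the adjoint value
    have expand : ((Dᴴ * 𝒜adj (𝒜 Xk1 - b)).trace).re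
        = ((Dᴴ * Λ).trace).re - lam * (D.trace).re + lam * ((Dᴴ * Δ).trace).re := by
      rw [hAdjEq]
      rw [Matrix.mul_sub, Matrix.mul_smul, Matrix.mul_sub, Matrix.mul_one, trace_sub,
        trace_smul, trace_sub, hDh.eq]
      simp [Complex.sub_re, Complex.smul_re]
      ring
    have hδ : ((Dᴴ * Δ).trace).re = -((Δᴴ * (Xk1 - Xk)).trace).re := by
      have h1 : Xk1 - Xk = -D := by rw [hD]; abel
      rw [h1, Matrix.mul_neg, trace_neg, Complex.neg_re, neg_neg,
        re_trace_conjTranspose_mul_comm]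
    have hcompl : ((Xk1ᴴ * Λ).trace).re = 0 := by
      rw [re_trace_conjTranspose_mul_comm, hcomp]; simp
    have hDΛ : ((Dᴴ * Λ).trace).re = ((Xkᴴ * Λ).trace).re := by
      rw [hD]
      rw [conjTranspose_sub, Matrix.sub_mul, trace_sub, Complex.sub_re, hcompl, sub_zero]
    have hnn : 0 ≤ ((Xkᴴ * Λ).trace).re := mul_psd_trace_re_nonneg hXk hΛ
    have hDtrace : (D.trace).re = Xk.trace.re - Xk1.trace.re := by
      rw [hD, trace_sub, Complex.sub_re]
    -- sum identity
    have hterm : ∀ i, (𝒜 Xk i - b i)^2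
        = (𝒜 Xk1 i - b i)^2 + (𝒜 D i)^2 + 2 * (𝒜 D i * (𝒜 Xk1 - b) i) := by
      intro i
      have hi : 𝒜 D i = 𝒜 Xk i - 𝒜 Xk1 i := by
        rw [hD, map_sub]; rfl
      simp only [Pi.sub_apply, hi]; ring
    have hsum : ∑ i, (𝒜 Xk i - b i)^2
        = ∑ i, (𝒜 Xk1 i - b i)^2 + ∑ i, (𝒜 D i)^2
          + 2 * ∑ i, 𝒜 D i * (𝒜 Xk1 - b) i := by
      rw [Finset.mul_sum, ← Finset.sum_add_distrib, ← Finset.sum_add_distrib]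
      exact Finset.sum_congr rfl fun i _ => hterm i
    -- unfold phi and enorm squares
    simp only [phi, esq]
    have e1 : ∑ i, ((𝒜 Xk - b) i)^2 = ∑ i, (𝒜 Xk i - b i)^2 := by
      simp [Pi.sub_apply]
    have e2 : ∑ i, ((𝒜 Xk1 - b) i)^2 = ∑ i, (𝒜 Xk1 i - b i)^2 := by
      simp [Pi.sub_apply]
    rw [e1, e2]
    nlinarith [hip, expand, hδ, hDΛ, hnn, hDtrace, hsum]
  · have h1 : 0 ≤ (1 / 2 : ℝ) * (enorm' (𝒜 (Xk - Xk1)))^2 := by positivity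
    have h2 : 0 ≤ lam * (frob Xk1 - frob Xk - ((Δᴴ * (Xk1 - Xk)).trace).re) :=
      mul_nonneg hlam.le (by linarith)
    linarith
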